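/- arXiv:math/0210201 — 2 statements merged into one kernel-verified Lean document; each statement's English description precedes it below -/
import Mathlib

section
/- For every integer m ≥ 2, the generalized Polynacci sequence U_n^(m) = trace(A_m^n) has initial values U_0^(m) = m, U_1^(m) = 1, and U_i^(m) = 2^i − 1 for every integer i with 2 ≤ i ≤ m−1. -/
/-- The Polynacci matrix `A_m`: first column all ones, first superdiagonal all ones,
all other entries zero (0-indexed). -/
def polyA (m : ℕ) : Matrix (Fin m) (Fin m) ℤ :=
  Matrix.of fun i j => if j.val = 0 then 1 else if j.val = i.val + 1 then 1 else 0

/-- Closed form for the `(i, j)` entry of `polyA m ^ n`, valid for `1 ≤ n ≤ m`. -/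
def polyEntry (m n i j : ℕ) : ℤ :=
  if j < n then
    (if i + n ≤ m + j then 2 ^ (n - 1 - j) else 2 ^ (n - 1 - j) - 2 ^ (i + n - j - m - 1))
  else if j = i + n then 1 else 0

lemma geom2 (n : ℕ) : ∑ i ∈ Finset.range n, (2 : ℤ) ^ i = 2 ^ n - 1 := by
  induction n with
  | zero => simp
  | succ n ih => rw [Finset.sum_range_succ, ih]; ring

lemma geom2' (n : ℕ) : ∑ k ∈ Finset.range n, (2 : ℤ) ^ (n - 1 - k) = 2 ^ n - 1 := by
  rw [Finset.sum_range_reflect (fun k => (2 : ℤ) ^ k) n]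
  exact geom2 n

lemma sum_def (n d : ℕ) (hd : d ≤ n) :
    ∑ k ∈ Finset.range n, (if k < d then (2 : ℤ) ^ (d - 1 - k) else 0) = 2 ^ d - 1 := by
  rw [← Finset.sum_subset (Finset.range_subset_range.2 hd)
    (f := fun k => if k < d then (2 : ℤ) ^ (d - 1 - k) else 0)]
  · rw [Finset.sum_congr rfl (fun k hk => ?_), geom2' d]
    rw [Finset.mem_range] at hk
    simp [hk]
  · intro x _ hx
    rw [Finset.mem_range] at hx
    simp [hx]

lemma sum_row (m n i : ℕ) (hn : 1 ≤ n) (hnm : n ≤ m) (hi : i < m) :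
    ∑ k ∈ Finset.range m, polyEntry m n i k = polyEntry m (n + 1) i 0 := by
  rw [← Finset.sum_range_add_sum_Ico _ hnm]
  have h2 : ∑ k ∈ Finset.Ico n m, polyEntry m n i k
      = if i + n < m then 1 else 0 := by
    rw [Finset.sum_congr rfl (fun k hk => ?_)]
    · rw [Finset.sum_ite_eq' (Finset.Ico n m) (i + n) (fun _ => (1 : ℤ))]
      simp only [Finset.mem_Ico]
      congr 1
      simp only [eq_iff_iff]
      omega
    · rw [Finset.mem_Ico] at hk
      unfold polyEntry
      rw [if_neg (by omega)]
  have h1 : ∑ k ∈ Finset.range n, polyEntry m n i k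
      = (2 ^ n - 1) - (2 ^ (i + n - m) - 1) := by
    have : ∀ k ∈ Finset.range n, polyEntry m n i k
        = (2 : ℤ) ^ (n - 1 - k) - (if k < i + n - m then (2 : ℤ) ^ (i + n - m - 1 - k) else 0) := by
      intro k hk
      rw [Finset.mem_range] at hk
      unfold polyEntry
      rw [if_pos hk]
      split_ifs with h h'
      · omega
      · simp
      · have : i + n - k - m - 1 = i + n - m - 1 - k := by omega
        rw [this]
      · omega
    rw [Finset.sum_congr rfl this, Finset.sum_sub_distrib, geom2' n,
      sum_def n (i + n - m) (by omega)]
  rw [h1, h2]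
  unfold polyEntry
  rw [if_pos (show 0 < n + 1 by omega)]
  by_cases hlt : i + n < m
  · rw [if_pos hlt, if_pos (show i + (n + 1) ≤ m + 0 by omega)]
    have e0 : i + n - m = 0 := by omega
    have e2 : n + 1 - 1 - 0 = n := by omega
    rw [e0, e2]; norm_num
  · rw [if_neg hlt, if_neg (show ¬(i + (n + 1) ≤ m + 0) by omega)]
    have e1 : i + (n + 1) - 0 - m - 1 = i + n - m := by omega
    have e2 : n + 1 - 1 - 0 = n := by omega
    rw [e1, e2]; ring

lemma polyEntry_shift (m n i j : ℕ) (hj : 1 ≤ j) :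
    polyEntry m n i (j - 1) = polyEntry m (n + 1) i j := by
  unfold polyEntry
  split_ifs <;> first
    | rfl
    | omega
    | (congr 1 <;> omega)
    | (congr 1 <;> congr 1 <;> omega)

lemma polyA_pow_entry (m : ℕ) : ∀ n, 1 ≤ n → n ≤ m → ∀ i j : Fin m,
    ((polyA m) ^ n) i j = polyEntry m n i.val j.val := by
  intro n
  induction n with
  | zero => omega
  | succ n ih =>
    intro _ hnm i j
    rcases Nat.eq_zero_or_pos n with h0 | hpos
    · subst h0
      have hi := i.isLt
      have hj := j.isLt
      rw [pow_one]
      unfold polyA polyEntry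
      simp only [Matrix.of_apply]
      split_ifs <;> first | rfl | omega | norm_num
    · rw [pow_succ, Matrix.mul_apply]
      by_cases hj0 : j.val = 0
      · have hA : ∀ k : Fin m, polyA m k j = 1 := by
          intro k; unfold polyA; simp [hj0]
        calc ∑ k, ((polyA m) ^ n) i k * polyA m k j
            = ∑ k : Fin m, polyEntry m n i.val k.val := by
              refine Finset.sum_congr rfl fun k _ => ?_
              rw [hA k, ih hpos (by omega) i k, mul_one]
          _ = ∑ k ∈ Finset.range m, polyEntry m n i.val k := by
              rw [Fin.sum_univ_eq_sum_range (fun k => polyEntry m n i.val k) m]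
          _ = polyEntry m (n + 1) i.val 0 := sum_row m n i.val hpos (by omega) i.isLt
          _ = polyEntry m (n + 1) i.val j.val := by rw [hj0]
      · have hjlt : j.val - 1 < m := by have := j.isLt; omega
        have hA : ∀ k : Fin m, polyA m k j = if j.val = k.val + 1 then 1 else 0 := by
          intro k; unfold polyA; simp [hj0]
        rw [Finset.sum_eq_single (⟨j.val - 1, hjlt⟩ : Fin m)]
        · rw [hA, if_pos (show j.val = (⟨j.val - 1, hjlt⟩ : Fin m).val + 1 by simp; omega),
            mul_one, ih hpos (by omega) i]
          exact polyEntry_shift m n i.val j.val (by omega)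
        · intro k _ hk
          rw [hA k, if_neg, mul_zero]
          intro h
          exact hk (Fin.ext (show k.val = j.val - 1 by omega))
        · intro h; exact absurd (Finset.mem_univ _) h

lemma trace_pow (m n : ℕ) (hn : 1 ≤ n) (hnm : n ≤ m) :
    ((polyA m) ^ n).trace = 2 ^ n - 1 := by
  rw [Matrix.trace]
  have : ∀ i : Fin m, ((polyA m) ^ n).diag i = if i.val < n then (2 : ℤ) ^ (n - 1 - i.val) else 0 := by
    intro i
    rw [Matrix.diag_apply, polyA_pow_entry m n hn hnm i i]
    unfold polyEntry
    split_ifs <;> first | rfl | omega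
  rw [Finset.sum_congr rfl (fun i _ => this i),
    Fin.sum_univ_eq_sum_range (fun k => if k < n then (2 : ℤ) ^ (n - 1 - k) else 0) m]
  exact sum_def m n hnm

theorem polynacci_initial_values (m : ℕ) (hm : 2 ≤ m) :
    ((polyA m) ^ 0).trace = (m : ℤ) ∧ ((polyA m) ^ 1).trace = 1 ∧
      ∀ i : ℕ, 2 ≤ i → i ≤ m - 1 → ((polyA m) ^ i).trace = 2 ^ i - 1 := by
  refine ⟨?_, ?_, ?_⟩
  · rw [pow_zero, Matrix.trace_one]
    simp
  · rw [trace_pow m 1 le_rfl (by omega)]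
    norm_num
  · intro i h2 hi
    exact trace_pow m i (by omega) (by omega)
end

section
/- For every integer m ≥ 1, the ordinary generating function of the reflected generalized Polynacci sequence Ũ_n^(m) = trace(B_m^n) satisfies, as an identity of formal power series over ℤ: (∑_{n≥0} Ũ_n^(m) x^n) · (1 + x + x² + ⋯ + x^{m−1} − x^m) = m + (m−1)x + (m−2)x² + ⋯ + x^{m−1}, i.e. the product equals ∑_{j=0}^{m−1} (m−j) x^j. -/
set_option maxHeartbeats 1000000

/-- The matrix `B_m`, the inverse of the Polynacci matrix: `B[1][m] = 1`,
`B[i][m] = -1` for `2 ≤ i ≤ m`, `B[i][i-1] = 1` for `2 ≤ i ≤ m`, other entries zero. -/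
def polyB (m : ℕ) : Matrix (Fin m) (Fin m) ℤ :=
  Matrix.of fun i j =>
    if i.val = 0 then (if j.val = m - 1 then 1 else 0)
    else if j.val = m - 1 then -1
    else if j.val + 1 = i.val then 1 else 0

/-- Explicit formula for `polyB m ^ n`, valid for `1 ≤ n ≤ m`. -/
def polyF (m n : ℕ) : Matrix (Fin m) (Fin m) ℤ :=
  Matrix.of fun i j =>
    if j.val + n = m then (if i.val = 0 then 1 else -1)
    else if i.val = 0 then (if j.val + n = m + 1 then -1 else 0)
    else if i.val < n then
      (if j.val + n = m + i.val then 2 else if j.val + n = m + i.val + 1 then -1 else 0)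
    else if j.val + n = i.val then 1 else 0

theorem polyF_lastrow (m n : ℕ) (hn1 : 1 ≤ n) (hnm : n + 1 ≤ m) (h : m - 1 < m) (j : Fin m) :
    polyF m n ⟨m - 1, h⟩ j = if j.val + n = m then -1 else if j.val + n + 1 = m then 1 else 0 := by
  have hj := j.isLt
  simp only [polyF, Matrix.of_apply]
  split_ifs <;> omega

theorem polyF_step (m n : ℕ) (hn1 : 1 ≤ n) (hnm : n + 1 ≤ m) (i j : Fin m) (hi0 : i.val ≠ 0)
    (h1 : i.val - 1 < m) (h2 : m - 1 < m) :
    polyF m (n + 1) i j = polyF m n ⟨i.val - 1, h1⟩ j - polyF m n ⟨m - 1, h2⟩ j := by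
  have hj := j.isLt
  have hi := i.isLt
  rw [polyF_lastrow m n hn1 hnm h2 j]
  simp only [polyF, Matrix.of_apply]
  split_ifs <;> omega

theorem polyF_row0 (m n : ℕ) (hn1 : 1 ≤ n) (hnm : n + 1 ≤ m) (i j : Fin m) (hi0 : i.val = 0)
    (h2 : m - 1 < m) :
    polyF m (n + 1) i j = polyF m n ⟨m - 1, h2⟩ j := by
  have hj := j.isLt
  rw [polyF_lastrow m n hn1 hnm h2 j]
  simp only [polyF, Matrix.of_apply]
  split_ifs <;> omega

theorem polyB_pow (m : ℕ) : ∀ n, 1 ≤ n → n ≤ m → polyB m ^ n = polyF m n := by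
  intro n
  induction n with
  | zero => omega
  | succ n ih =>
    intro _ hnm
    rcases Nat.lt_or_ge n 1 with h1 | hn1
    · -- n = 0, base case
      have hn0 : n = 0 := by omega
      subst hn0
      ext i j
      have hi := i.isLt
      have hj := j.isLt
      rw [zero_add, pow_one]
      simp only [polyB, polyF, Matrix.of_apply]
      split_ifs <;> omega
    · have hnm' : n ≤ m := by omega
      rw [pow_succ', ih hn1 hnm']
      ext i j
      have hi := i.isLt
      have hj := j.isLt
      have hm1 : m - 1 < m := by omega
      rw [Matrix.mul_apply]
      by_cases hi0 : i.val = 0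
      · -- row 0 of B picks out row m-1 of polyF
        rw [Finset.sum_eq_single (⟨m - 1, hm1⟩ : Fin m)]
        · have hB : polyB m i ⟨m - 1, hm1⟩ = 1 := by
            simp [polyB, hi0]
          rw [hB, one_mul]
          exact (polyF_row0 m n hn1 hnm i j hi0 hm1).symm
        · intro k _ hk
          have hk' : k.val ≠ m - 1 := fun h => hk (Fin.ext h)
          have hB : polyB m i k = 0 := by
            simp [polyB, hi0, hk']
          rw [hB, zero_mul]
        · intro h; exact absurd (Finset.mem_univ _) h
      · -- row i of B: 1 at i-1, -1 at m-1
        have hi1 : i.val - 1 < m := by omega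
        have hdecomp : ∀ k : Fin m, polyB m i k * polyF m n k j =
            (if k = (⟨i.val - 1, hi1⟩ : Fin m) then polyF m n ⟨i.val - 1, hi1⟩ j else 0) +
            (if k = (⟨m - 1, hm1⟩ : Fin m) then -polyF m n ⟨m - 1, hm1⟩ j else 0) := by
          intro k
          have hk := k.isLt
          by_cases hk1 : k.val + 1 = i.val
          · have hne : k.val ≠ m - 1 := by omega
            have hB : polyB m i k = 1 := by
              simp only [polyB, Matrix.of_apply, if_neg hi0, if_neg hne, if_pos hk1]
            have e1 : k = (⟨i.val - 1, hi1⟩ : Fin m) := Fin.ext (by simp; omega)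
            have e2 : k ≠ (⟨m - 1, hm1⟩ : Fin m) := fun h => hne (by rw [h])
            rw [hB, one_mul, if_pos e1, if_neg e2, e1, add_zero]
          · by_cases hk2 : k.val = m - 1
            · have hB : polyB m i k = -1 := by
                simp only [polyB, Matrix.of_apply, if_neg hi0, if_pos hk2]
              have e1 : k ≠ (⟨i.val - 1, hi1⟩ : Fin m) := by
                intro h
                have : k.val = i.val - 1 := by rw [h]
                omega
              have e2 : k = (⟨m - 1, hm1⟩ : Fin m) := Fin.ext hk2
              rw [hB, if_neg e1, if_pos e2, e2, zero_add, neg_one_mul]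
            · have hB : polyB m i k = 0 := by
                simp only [polyB, Matrix.of_apply, if_neg hi0, if_neg hk2, if_neg hk1]
              have e1 : k ≠ (⟨i.val - 1, hi1⟩ : Fin m) := by
                intro h
                have : k.val = i.val - 1 := by rw [h]
                omega
              have e2 : k ≠ (⟨m - 1, hm1⟩ : Fin m) := fun h => hk2 (by rw [h])
              rw [hB, zero_mul, if_neg e1, if_neg e2, add_zero]
        rw [Finset.sum_congr rfl (fun k _ => hdecomp k), Finset.sum_add_distrib,
          Finset.sum_ite_eq' Finset.univ, Finset.sum_ite_eq' Finset.univ,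
          if_pos (Finset.mem_univ _), if_pos (Finset.mem_univ _)]
        rw [← sub_eq_add_neg]
        exact (polyF_step m n hn1 hnm i j hi0 hi1 hm1).symm

theorem trace_polyF (m n : ℕ) (hn1 : 1 ≤ n) (hnm : n + 1 ≤ m) :
    (polyF m n).trace = -1 := by
  have hdiag : ∀ i : Fin m, polyF m n i i = if i.val + n = m then -1 else 0 := by
    intro i
    have hi := i.isLt
    simp only [polyF, Matrix.of_apply]
    split_ifs <;> omega
  have hmn : m - n < m := by omega
  rw [Matrix.trace]
  rw [Finset.sum_congr rfl (fun i _ => show Matrix.diag (polyF m n) i = _ from hdiag i)]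
  rw [Finset.sum_eq_single (⟨m - n, hmn⟩ : Fin m)]
  · have hv : ((⟨m - n, hmn⟩ : Fin m) : ℕ) = m - n := rfl
    rw [hv, if_pos (by omega)]
  · intro k _ hk
    rw [if_neg]
    intro h
    exact hk (Fin.ext (show k.val = m - n by omega))
  · intro h; exact absurd (Finset.mem_univ _) h

theorem sum_polyF (m : ℕ) (hm : 1 ≤ m) :
    ∑ k ∈ Finset.Icc 1 m, polyF m k = (1 : Matrix (Fin m) (Fin m) ℤ) := by
  ext i j
  have hi := i.isLt
  have hj := j.isLt
  rw [Matrix.sum_apply, Matrix.one_apply]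
  by_cases hi0 : i.val = 0
  · have hc : ∀ k ∈ Finset.Icc 1 m, polyF m k i j =
        (if k = m - j.val then (1 : ℤ) else 0) + (if k = m + 1 - j.val then -1 else 0) := by
      intro k hk
      rw [Finset.mem_Icc] at hk
      simp only [polyF, Matrix.of_apply]
      split_ifs <;> omega
    rw [Finset.sum_congr rfl hc, Finset.sum_add_distrib,
      Finset.sum_ite_eq' (Finset.Icc 1 m), Finset.sum_ite_eq' (Finset.Icc 1 m)]
    have hij : (i = j) ↔ (j.val = 0) := by
      rw [Fin.ext_iff]; omega
    simp only [Finset.mem_Icc, hij]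
    split_ifs <;> omega
  · have hc : ∀ k ∈ Finset.Icc 1 m, polyF m k i j =
        (if k = m - j.val then (-1 : ℤ) else 0) + (if k = m + i.val - j.val then 2 else 0) +
        (if k = m + i.val + 1 - j.val then -1 else 0) + (if k = i.val - j.val then 1 else 0) := by
      intro k hk
      rw [Finset.mem_Icc] at hk
      simp only [polyF, Matrix.of_apply]
      split_ifs <;> omega
    rw [Finset.sum_congr rfl hc, Finset.sum_add_distrib, Finset.sum_add_distrib,
      Finset.sum_add_distrib, Finset.sum_ite_eq' (Finset.Icc 1 m),
      Finset.sum_ite_eq' (Finset.Icc 1 m), Finset.sum_ite_eq' (Finset.Icc 1 m),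
      Finset.sum_ite_eq' (Finset.Icc 1 m)]
    have hij : (i = j) ↔ (i.val = j.val) := Fin.ext_iff
    simp only [Finset.mem_Icc, hij]
    split_ifs <;> omega

theorem sum_polyB_pow (m : ℕ) (hm : 1 ≤ m) :
    ∑ k ∈ Finset.Icc 1 m, polyB m ^ k = (1 : Matrix (Fin m) (Fin m) ℤ) := by
  rw [← sum_polyF m hm]
  exact Finset.sum_congr rfl (fun k hk => by
    rw [Finset.mem_Icc] at hk
    exact polyB_pow m k hk.1 hk.2)

theorem sum_Icc_one_eq {M : Type*} [AddCommMonoid M] (f : ℕ → M) (m : ℕ) :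
    ∑ k ∈ Finset.Icc 1 m, f k = ∑ j ∈ Finset.range m, f (j + 1) := by
  induction m with
  | zero => simp
  | succ m ih =>
    have hins : Finset.Icc 1 (m + 1) = insert (m + 1) (Finset.Icc 1 m) := by
      ext k
      simp only [Finset.mem_Icc, Finset.mem_insert]
      omega
    rw [Finset.sum_range_succ, ← ih, hins,
      Finset.sum_insert (by simp only [Finset.mem_Icc]; omega), add_comm]

open PowerSeries in
theorem reflected_polynacci_ogf (m : ℕ) (hm : 1 ≤ m) :
    (PowerSeries.mk fun n => ((polyB m) ^ n).trace) *
        (1 + (∑ j ∈ Finset.Icc 1 (m - 1), (X : ℤ⟦X⟧) ^ j) - (X : ℤ⟦X⟧) ^ m) =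
      ∑ j ∈ Finset.range m, PowerSeries.C ((m : ℤ) - (j : ℤ)) * (X : ℤ⟦X⟧) ^ j := by
  set U : ℕ → ℤ := fun n => ((polyB m) ^ n).trace with hU
  have hU0 : U 0 = (m : ℤ) := by
    simp [hU, Matrix.trace_one]
  have hUk : ∀ k, 1 ≤ k → k + 1 ≤ m → U k = -1 := by
    intro k h1 h2
    rw [hU]
    simp only
    rw [polyB_pow m k h1 (by omega)]
    exact trace_polyF m k h1 h2
  have hrange : (1 : ℤ⟦X⟧) + (∑ j ∈ Finset.Icc 1 (m - 1), (X : ℤ⟦X⟧) ^ j) =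
      ∑ j ∈ Finset.range m, (X : ℤ⟦X⟧) ^ j := by
    have h : Finset.range m = insert 0 (Finset.Icc 1 (m - 1)) := by
      ext k
      simp only [Finset.mem_range, Finset.mem_insert, Finset.mem_Icc]
      omega
    rw [h, Finset.sum_insert (by simp), pow_zero]
  rw [hrange]
  ext n
  rw [map_sum]
  rw [mul_sub, map_sub, Finset.mul_sum, map_sum]
  simp only [PowerSeries.coeff_mul_X_pow', PowerSeries.coeff_C, PowerSeries.coeff_mk]
  have hR : ∑ x ∈ Finset.range m,
        (if x ≤ n then (if n - x = 0 then ((m : ℤ) - (x : ℤ)) else 0) else 0) =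
      if n ∈ Finset.range m then ((m : ℤ) - (n : ℤ)) else 0 := by
    rw [Finset.sum_congr rfl (fun x _ =>
      show _ = if n = x then ((m : ℤ) - (x : ℤ)) else 0 by split_ifs <;> omega),
      Finset.sum_ite_eq]
  rw [hR]
  by_cases hn : n < m
  · rw [if_pos (Finset.mem_range.mpr hn), if_neg (by omega)]
    have hsub : Finset.range (n + 1) ⊆ Finset.range m := by
      intro x hx
      rw [Finset.mem_range] at *
      omega
    have hsubset : ∑ j ∈ Finset.range m, (if j ≤ n then U (n - j) else 0) =
        ∑ j ∈ Finset.range (n + 1), (if j ≤ n then U (n - j) else 0) :=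
      (Finset.sum_subset hsub (fun x _ hx => by
        rw [Finset.mem_range] at hx
        exact if_neg (by omega))).symm
    have hifpos : ∑ j ∈ Finset.range (n + 1), (if j ≤ n then U (n - j) else 0) =
        ∑ j ∈ Finset.range (n + 1), U (n - j) :=
      Finset.sum_congr rfl (fun j hj => if_pos (by
        rw [Finset.mem_range] at hj
        omega))
    rw [hsubset, hifpos]
    have hreflect : ∑ j ∈ Finset.range (n + 1), U (n - j) = ∑ j ∈ Finset.range (n + 1), U j := by
      rw [← Finset.sum_range_reflect U (n + 1)]
      exact Finset.sum_congr rfl (fun j hj => by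
        rw [Finset.mem_range] at hj
        congr 1 <;> omega)
    rw [hreflect]
    have hins : Finset.range (n + 1) = insert 0 (Finset.Icc 1 n) := by
      ext k
      simp only [Finset.mem_range, Finset.mem_insert, Finset.mem_Icc]
      omega
    rw [hins, Finset.sum_insert (by simp), hU0]
    have hconst : ∑ k ∈ Finset.Icc 1 n, U k = ∑ k ∈ Finset.Icc 1 n, (-1 : ℤ) :=
      Finset.sum_congr rfl (fun k hk => by
        rw [Finset.mem_Icc] at hk
        exact hUk k hk.1 (by omega))
    rw [hconst]
    rw [Finset.sum_const, Nat.card_Icc]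
    simp only [Nat.add_sub_cancel, nsmul_eq_mul, mul_neg, mul_one]
    push_cast
    omega
  · have h1 : (if m ≤ n then U (n - m) else 0) = U (n - m) := if_pos (by omega)
    have h2 : (if n ∈ Finset.range m then ((m : ℤ) - (n : ℤ)) else 0) = 0 :=
      if_neg (by simp only [Finset.mem_range]; omega)
    rw [h1, h2]
    have hsum : ∑ j ∈ Finset.range m, (if j ≤ n then U (n - j) else 0) =
        ∑ j ∈ Finset.range m, U (n - j) :=
      Finset.sum_congr rfl (fun j hj => if_pos (by
        rw [Finset.mem_range] at hj
        omega))
    rw [hsum]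
    have key : ∑ j ∈ Finset.range m, U (n - j) = U (n - m) := by
      rw [hU]
      simp only
      rw [← Matrix.trace_sum]
      congr 1
      have hterm : ∀ j ∈ Finset.range m, polyB m ^ (n - j) =
          polyB m ^ (n - m) * polyB m ^ (m - j) := by
        intro j hj
        rw [Finset.mem_range] at hj
        rw [← pow_add]
        congr 1
        omega
      rw [Finset.sum_congr rfl hterm, ← Finset.mul_sum]
      have hbij : ∑ j ∈ Finset.range m, polyB m ^ (m - j) =
          ∑ k ∈ Finset.Icc 1 m, polyB m ^ k := by
        have h1 := Finset.sum_range_reflect (fun j => polyB m ^ (j + 1)) m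
        have h2 : ∑ j ∈ Finset.range m, polyB m ^ (m - j) =
            ∑ j ∈ Finset.range m, polyB m ^ (m - 1 - j + 1) :=
          Finset.sum_congr rfl (fun j hj => by
            rw [Finset.mem_range] at hj
            congr 1
            omega)
        have h3 : ∑ k ∈ Finset.Icc 1 m, polyB m ^ k =
            ∑ j ∈ Finset.range m, polyB m ^ (j + 1) :=
          sum_Icc_one_eq (fun k => polyB m ^ k) m
        rw [h2, h3, ← h1]
      rw [hbij, sum_polyB_pow m hm, mul_one]
    rw [key]
    omega
end
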